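/- Let $p_n(x) \in \mathbb{Z}[x]$ be a sequence of monic degree $d$ polynomials whose constant coefficients are $\pm 1$. Suppose there is a sequence of real numbers $\lambda_n \to \infty$ such that $p_n(\lambda_n) = 0$ for all $n$, and suppose $p_n(1) \ne 0$ for all $n$. If $\lim_{n\to\infty} p_n(x)/(x-\lambda_n) = x(x-1)^{d-2}$ (coefficientwise), then $p_n(x)$ is irreducible over $\mathbb{Q}$ for all but finitely many $n$. -/

import Mathlib

open Polynomial Filter

private lemma cauchyBound {M : ℝ} (q : Polynomial ℂ) (hm : q.Monic) (hd : 1 ≤ q.natDegree)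
    (hc : ∀ j, ‖q.coeff j‖ ≤ M) {z : ℂ} (hz : q.eval z = 0) :
    ‖z‖ ≤ max 1 (M * q.natDegree) := by
  by_contra hlt
  push_neg at hlt
  have h1 : (1:ℝ) < ‖z‖ := (le_max_left _ _).trans_lt hlt
  have h2 : M * q.natDegree < ‖z‖ := (le_max_right _ _).trans_lt hlt
  set m := q.natDegree with hm'
  have hM0 : 0 ≤ M := le_trans (norm_nonneg _) (hc 0)
  have heval := q.eval_eq_sum_range (x := z)
  rw [hz, Finset.sum_range_succ, ← hm', hm.coeff_natDegree, one_mul] at heval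
  have hzm : z ^ m = -∑ i ∈ Finset.range m, q.coeff i * z ^ i := by
    linear_combination -heval
  have hkey : ‖z‖ ^ m ≤ m * (M * ‖z‖ ^ (m-1)) := by
    calc ‖z‖ ^ m = ‖z ^ m‖ := (norm_pow _ _).symm
    _ = ‖∑ i ∈ Finset.range m, q.coeff i * z ^ i‖ := by rw [hzm, norm_neg]
    _ ≤ ∑ i ∈ Finset.range m, ‖q.coeff i * z ^ i‖ := norm_sum_le _ _
    _ ≤ ∑ _i ∈ Finset.range m, M * ‖z‖ ^ (m-1) := by
        refine Finset.sum_le_sum fun i hi => ?_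
        rw [norm_mul, norm_pow]
        have him : i ≤ m - 1 := by have := Finset.mem_range.mp hi; omega
        exact mul_le_mul (hc i) (pow_le_pow_right₀ h1.le him)
          (pow_nonneg (norm_nonneg _) _) hM0
    _ = m * (M * ‖z‖ ^ (m-1)) := by
        rw [Finset.sum_const, Finset.card_range, nsmul_eq_mul]
  have hsplit : ‖z‖ ^ m = ‖z‖ ^ (m-1) * ‖z‖ := by
    rw [← pow_succ]
    congr 1
    omega
  rw [hsplit] at hkey
  have hpos : 0 < ‖z‖ ^ (m-1) := pow_pos (by linarith) _
  nlinarith [hkey, hpos, h2]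

private lemma finite_bddPolys (D : ℕ) (Cb : ℤ) :
    {g : Polynomial ℤ | g.natDegree ≤ D ∧ ∀ i, |g.coeff i| ≤ Cb}.Finite := by
  refine Set.Finite.of_finite_image (f := fun g : Polynomial ℤ => fun i : Fin (D+1) => g.coeff i)
    ?_ ?_
  · refine ((Set.Finite.pi fun _ : Fin (D+1) => Set.finite_Icc (-Cb) Cb)).subset ?_
    rintro _ ⟨g, hg, rfl⟩
    intro i _
    have := abs_le.mp (hg.2 i)
    exact ⟨this.1, this.2⟩
  · rintro g hg g' hg' h
    apply Polynomial.ext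
    intro i
    rcases le_or_gt i D with hiD | hiD
    · exact congrFun h ⟨i, by omega⟩
    · rw [coeff_eq_zero_of_natDegree_lt (lt_of_le_of_lt hg.1 hiD),
        coeff_eq_zero_of_natDegree_lt (lt_of_le_of_lt hg'.1 hiD)]

private lemma modByMonic_coeff_expand (G : Polynomial ℝ) (hG : G.Monic) (D : ℕ)
    (q : Polynomial ℝ) (hq : q.natDegree < D) (i : ℕ) :
    (q %ₘ G).coeff i = ∑ j ∈ Finset.range D, q.coeff j * ((X ^ j %ₘ G).coeff i) := by
  conv_lhs => rw [q.as_sum_range' D hq]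
  have key : (∑ j ∈ Finset.range D, (monomial j) (q.coeff j)) %ₘ G
      = ∑ j ∈ Finset.range D, q.coeff j • (X ^ j %ₘ G) := by
    calc (∑ j ∈ Finset.range D, (monomial j) (q.coeff j)) %ₘ G
        = modByMonicHom G (∑ j ∈ Finset.range D, (monomial j) (q.coeff j)) := rfl
      _ = ∑ j ∈ Finset.range D, modByMonicHom G ((monomial j) (q.coeff j)) :=
          map_sum _ _ _
      _ = ∑ j ∈ Finset.range D, q.coeff j • (X ^ j %ₘ G) := by
          refine Finset.sum_congr rfl fun j _ => ?_
          rw [← smul_X_eq_monomial, LinearMap.map_smul]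
          rfl
  rw [key, finset_sum_coeff]
  refine Finset.sum_congr rfl fun j _ => ?_
  rw [coeff_smul, smul_eq_mul]

private lemma not_dvd_limit (g : Polynomial ℤ) (hm : g.Monic) (hdeg : 1 ≤ g.natDegree)
    (h0 : g.coeff 0 = 1 ∨ g.coeff 0 = -1) (h1 : g.eval 1 ≠ 0) (k : ℕ) :
    ¬ (g.map (Int.castRingHom ℝ) ∣ (X * (X - 1) ^ k : Polynomial ℝ)) := by
  intro hdvd
  have hgQm : (g.map (Int.castRingHom ℚ)).Monic := hm.map _
  have hmapmap : (g.map (Int.castRingHom ℚ)).map (algebraMap ℚ ℝ) = g.map (Int.castRingHom ℝ) := by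
    rw [Polynomial.map_map, show (algebraMap ℚ ℝ).comp (Int.castRingHom ℚ)
      = Int.castRingHom ℝ from RingHom.ext_int _ _]
  have hdvdQ : g.map (Int.castRingHom ℚ) ∣ (X * (X - 1) ^ k : Polynomial ℚ) := by
    rw [← modByMonic_eq_zero_iff_dvd hgQm]
    apply Polynomial.map_injective (algebraMap ℚ ℝ) (algebraMap ℚ ℝ).injective
    rw [Polynomial.map_modByMonic _ hgQm, hmapmap, Polynomial.map_zero,
      Polynomial.map_mul, Polynomial.map_pow, Polynomial.map_sub, Polynomial.map_X,
      Polynomial.map_one]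
    exact (modByMonic_eq_zero_iff_dvd (hm.map _)).mpr hdvd
  have hX : ¬ ((X : Polynomial ℚ) ∣ g.map (Int.castRingHom ℚ)) := by
    rw [Polynomial.X_dvd_iff, coeff_map]
    rcases h0 with h | h <;> simp [h]
  have hcop : IsCoprime (g.map (Int.castRingHom ℚ)) (X : Polynomial ℚ) :=
    ((Polynomial.prime_X.coprime_iff_not_dvd).mpr hX).symm
  have h2 : g.map (Int.castRingHom ℚ) ∣ ((X : Polynomial ℚ) - 1) ^ k :=
    hcop.dvd_of_dvd_mul_left hdvdQ
  have hX1 : ((X : Polynomial ℚ) - 1) = X - C 1 := by rw [C_1]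
  have hprime : Prime ((X : Polynomial ℚ) - 1) := by
    rw [hX1]; exact Polynomial.prime_X_sub_C 1
  obtain ⟨i, hik, hassoc⟩ := (dvd_prime_pow hprime k).mp h2
  have heq : g.map (Int.castRingHom ℚ) = ((X : Polynomial ℚ) - 1) ^ i := by
    refine Polynomial.eq_of_monic_of_associated hgQm ?_ hassoc
    rw [hX1]
    exact (monic_X_sub_C 1).pow i
  rcases Nat.eq_zero_or_pos i with hi | hi
  · rw [hi, pow_zero] at heq
    have hd0 : g.natDegree = 0 := by
      have := congrArg natDegree heq
      rwa [hm.natDegree_map, natDegree_one] at this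
    omega
  · have hz : (g.map (Int.castRingHom ℚ)).eval 1 = 0 := by
      rw [heq]
      simp [zero_pow hi.ne']
    have h1' : (g.map (Int.castRingHom ℚ)).eval 1 = ((g.eval 1 : ℤ) : ℚ) := by
      rw [Polynomial.eval_map, ← map_one (Int.castRingHom ℚ), Polynomial.eval₂_at_apply]
      rfl
    have : ((g.eval 1 : ℤ) : ℚ) = 0 := by rw [← h1']; exact hz
    exact h1 (by exact_mod_cast this)

theorem stmt0 (d : ℕ) (p : ℕ → Polynomial ℤ)
    (hmonic : ∀ n, (p n).Monic) (hdeg : ∀ n, (p n).natDegree = d)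
    (hconst : ∀ n, (p n).coeff 0 = 1 ∨ (p n).coeff 0 = -1)
    (lam : ℕ → ℝ) (hlam : Tendsto lam atTop atTop)
    (hroot : ∀ n, ((p n).map (Int.castRingHom ℝ)).eval (lam n) = 0)
    (hone : ∀ n, (p n).eval 1 ≠ 0)
    (hconv : ∀ j : ℕ, Tendsto
      (fun n => (((p n).map (Int.castRingHom ℝ)) /ₘ (X - C (lam n))).coeff j)
      atTop (nhds ((X * (X - 1) ^ (d - 2) : Polynomial ℝ).coeff j))) :
    ∀ᶠ n in atTop, Irreducible ((p n).map (Int.castRingHom ℚ)) := by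
  rcases Nat.lt_or_ge d 2 with hd2 | hd2
  · interval_cases d
    · -- d = 0 : hypotheses are contradictory
      exfalso
      have h1 : p 0 = 1 := (hmonic 0).natDegree_eq_zero.mp (hdeg 0)
      have := hroot 0
      rw [h1] at this
      simp at this
    · -- d = 1 : always irreducible
      refine Eventually.of_forall fun n => ?_
      have hm : ((p n).map (Int.castRingHom ℚ)).Monic := (hmonic n).map _
      have hd1 : ((p n).map (Int.castRingHom ℚ)).natDegree = 1 := by
        rw [(hmonic n).natDegree_map]; exact hdeg n
      rw [hm.eq_X_add_C hd1, show (X + C (((p n).map (Int.castRingHom ℚ)).coeff 0))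
          = X - C (-(((p n).map (Int.castRingHom ℚ)).coeff 0)) by rw [map_neg, sub_neg_eq_add]]
      exact irreducible_X_sub_C _
  -- main case : d ≥ 2
  set R : ℤ →+* ℝ := Int.castRingHom ℝ with hR
  set q : ℕ → Polynomial ℝ := fun n => ((p n).map R) /ₘ (X - C (lam n)) with hq
  set Q : Polynomial ℝ := X * (X - 1) ^ (d - 2) with hQ
  have hconv' : ∀ j, Tendsto (fun n => (q n).coeff j) atTop (nhds (Q.coeff j)) := by
    intro j
    simp only [hq, hQ]
    exact hconv j
  have hPm : ∀ n, ((p n).map R).Monic := fun n => (hmonic n).map R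
  have hPd : ∀ n, ((p n).map R).natDegree = d := fun n => by
    rw [(hmonic n).natDegree_map]; exact hdeg n
  have hfac : ∀ n, (X - C (lam n)) * q n = (p n).map R := by
    intro n
    simp only [hq]
    exact mul_divByMonic_eq_iff_isRoot.mpr (hroot n)
  have hqm : ∀ n, (q n).Monic := fun n =>
    Monic.of_mul_monic_left (monic_X_sub_C (lam n)) (by rw [hfac n]; exact hPm n)
  have hqd : ∀ n, (q n).natDegree = d - 1 := by
    intro n
    have h1 := hfac n
    have h2 : ((X - C (lam n)) * q n).natDegree = 1 + (q n).natDegree := by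
      rw [natDegree_mul (X_sub_C_ne_zero _) (hqm n).ne_zero, natDegree_X_sub_C]
    rw [h1, hPd n] at h2
    omega
  have hX1 : (X - 1 : Polynomial ℝ) = X - C 1 := by rw [C_1]
  have hQd : Q.natDegree = d - 1 := by
    rw [hQ, natDegree_mul X_ne_zero (pow_ne_zero _ (by rw [hX1]; exact X_sub_C_ne_zero 1)),
      natDegree_X, natDegree_pow, hX1, natDegree_X_sub_C]
    omega
  -- uniform bound on coefficients of q n
  have hbdd : ∀ j, ∃ Mj : ℝ, ∀ n, |(q n).coeff j| ≤ Mj := by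
    intro j
    obtain ⟨Mj, hMj⟩ := ((hconv' j).abs).bddAbove_range
    exact ⟨Mj, fun n => hMj (Set.mem_range_self n)⟩
  choose Mf hMf using hbdd
  set M : ℝ := 1 + ∑ j ∈ Finset.range d, max (Mf j) 0 with hM
  have hM1 : 1 ≤ M := by
    have : 0 ≤ ∑ j ∈ Finset.range d, max (Mf j) 0 :=
      Finset.sum_nonneg fun j _ => le_max_right _ _
    simp only [hM]
    linarith
  have hMb : ∀ n j, |(q n).coeff j| ≤ M := by
    intro n j
    rcases Nat.lt_or_ge j d with hj | hj
    · have h1 : max (Mf j) 0 ≤ ∑ i ∈ Finset.range d, max (Mf i) 0 :=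
        Finset.single_le_sum (fun i _ => le_max_right (Mf i) 0) (Finset.mem_range.mpr hj)
      have h2 := (hMf j n).trans (le_max_left (Mf j) 0)
      simp only [hM]
      linarith
    · have : (q n).coeff j = 0 := coeff_eq_zero_of_natDegree_lt (by rw [hqd n]; omega)
      rw [this, abs_zero]; linarith
  -- all complex roots of q n are bounded
  have hqroot : ∀ n (z : ℂ), ((q n).map (algebraMap ℝ ℂ)).eval z = 0 → ‖z‖ ≤ max 1 (M * d) := by
    intro n z hz
    have hmc : ((q n).map (algebraMap ℝ ℂ)).Monic := (hqm n).map _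
    have hdc : ((q n).map (algebraMap ℝ ℂ)).natDegree = d - 1 := by
      rw [(hqm n).natDegree_map]; exact hqd n
    have hcc : ∀ j, ‖((q n).map (algebraMap ℝ ℂ)).coeff j‖ ≤ M := by
      intro j
      rw [coeff_map]
      simpa [Real.norm_eq_abs] using hMb n j
    have hcb := cauchyBound _ hmc (by rw [hdc]; omega) hcc hz
    rw [hdc] at hcb
    refine hcb.trans (max_le_max le_rfl ?_)
    have hcast : ((d - 1 : ℕ) : ℝ) ≤ (d : ℝ) := by exact_mod_cast Nat.sub_le d 1
    nlinarith [hM1]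
  set Rad : ℝ := max 1 (M * d) with hRad
  set B' : ℤ := ⌈max Rad 1 ^ d * ((d.choose (d / 2) : ℕ) : ℝ)⌉ with hB'
  set S : Set (Polynomial ℤ) := {g | g.Monic ∧ 1 ≤ g.natDegree ∧ g.natDegree ≤ d ∧
    (g.coeff 0 = 1 ∨ g.coeff 0 = -1) ∧ g.eval 1 ≠ 0 ∧ ∀ i, |g.coeff i| ≤ B'} with hS
  have hSfin : S.Finite := by
    apply (finite_bddPolys d B').subset
    rintro g ⟨_, _, h3, _, _, h6⟩
    exact ⟨h3, h6⟩
  have hev2 : ∀ᶠ n in atTop, ∀ g ∈ S, ¬ (g.map R ∣ q n) := by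
    rw [eventually_all_finite hSfin]
    rintro g ⟨hg1, hg2, hg3, hg4, hg5, hg6⟩
    have hGm : (g.map R).Monic := hg1.map R
    have hnd : ¬ (g.map R ∣ Q) := not_dvd_limit g hg1 hg2 hg4 hg5 (d - 2)
    have hr : Q %ₘ (g.map R) ≠ 0 := fun h => hnd ((modByMonic_eq_zero_iff_dvd hGm).mp h)
    obtain ⟨i, hi⟩ : ∃ i, (Q %ₘ (g.map R)).coeff i ≠ 0 := by
      by_contra hcon
      push_neg at hcon
      exact hr (Polynomial.ext fun i => by rw [hcon i, coeff_zero])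
    have ht : Tendsto (fun n => ((q n) %ₘ (g.map R)).coeff i) atTop
        (nhds ((Q %ₘ (g.map R)).coeff i)) := by
      have hrw : ∀ n, ((q n) %ₘ (g.map R)).coeff i
          = ∑ j ∈ Finset.range d, (q n).coeff j * ((X ^ j %ₘ (g.map R)).coeff i) :=
        fun n => modByMonic_coeff_expand _ hGm d _ (by rw [hqd n]; omega) i
      have hrw2 : ((Q %ₘ (g.map R)).coeff i)
          = ∑ j ∈ Finset.range d, Q.coeff j * ((X ^ j %ₘ (g.map R)).coeff i) :=
        modByMonic_coeff_expand _ hGm d _ (by rw [hQd]; omega) i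
      rw [hrw2]
      refine Tendsto.congr (fun n => (hrw n).symm) ?_
      exact tendsto_finset_sum _ fun j _ => (hconv' j).mul_const _
    filter_upwards [ht.eventually_ne hi] with n hn hdvd
    exact hn (by rw [(modByMonic_eq_zero_iff_dvd hGm).mpr hdvd, coeff_zero])
  have hev1 : ∀ᶠ n in atTop, Rad < lam n := hlam.eventually_gt_atTop Rad
  filter_upwards [hev1, hev2] with n hlamn hSn
  have hlam1 : (1:ℝ) < lam n := lt_of_le_of_lt (le_max_left _ _) hlamn
  have hqval : (q n).eval (lam n) ≠ 0 := by
    intro h0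
    have hzc : ((q n).map (algebraMap ℝ ℂ)).eval ((algebraMap ℝ ℂ) (lam n)) = 0 := by
      rw [Polynomial.eval_map, Polynomial.eval₂_at_apply, h0, map_zero]
    have hle := hqroot n _ hzc
    rw [show (algebraMap ℝ ℂ) (lam n) = ((lam n : ℝ) : ℂ) from rfl, Complex.norm_real,
      Real.norm_eq_abs, abs_of_pos (by linarith)] at hle
    exact absurd hle (not_le.mpr hlamn)
  have key : ∀ f g : Polynomial ℤ, f.Monic → g.Monic → p n = f * g →
      1 ≤ f.natDegree → 1 ≤ g.natDegree → (g.map R).eval (lam n) ≠ 0 → False := by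
    intro f g hfm hgm hfg hfd hgd hgval
    have hdsum : f.natDegree + g.natDegree = d := by
      rw [← hdeg n, hfg, natDegree_mul hfm.ne_zero hgm.ne_zero]
    have hGdvdP : g.map R ∣ (p n).map R := Polynomial.map_dvd R ⟨f, by rw [hfg]; ring⟩
    have hcop : IsCoprime (g.map R) (X - C (lam n)) := by
      refine (((irreducible_X_sub_C (lam n)).coprime_iff_not_dvd).mpr ?_).symm
      intro hdvd
      exact hgval ((Polynomial.dvd_iff_isRoot).mp hdvd)
    have hGdvdq : g.map R ∣ q n := by
      refine hcop.dvd_of_dvd_mul_left ?_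
      rw [← hfac n] at hGdvdP
      exact hGdvdP
    have hgS : g ∈ S := by
      have hc0 : g.coeff 0 = 1 ∨ g.coeff 0 = -1 := by
        have hu : IsUnit ((p n).coeff 0) := by
          rcases hconst n with h | h <;> rw [h]
          · exact isUnit_one
          · exact isUnit_one.neg
        rw [hfg, mul_coeff_zero] at hu
        exact Int.isUnit_iff.mp (isUnit_of_mul_isUnit_right hu)
      have hg1' : g.eval 1 ≠ 0 := by
        intro h10
        apply hone n
        rw [hfg, eval_mul, h10, mul_zero]
      have hgb : ∀ i, |g.coeff i| ≤ B' := by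
        intro i
        have hgc : g.map (Int.castRingHom ℂ) ∣ (q n).map (algebraMap ℝ ℂ) := by
          have hmd := Polynomial.map_dvd (algebraMap ℝ ℂ) hGdvdq
          rwa [Polynomial.map_map,
            show (algebraMap ℝ ℂ).comp R = Int.castRingHom ℂ from RingHom.ext_int _ _] at hmd
        have hroots : ∀ z ∈ (g.map (Int.castRingHom ℂ)).roots, ‖z‖ ≤ Rad := by
          intro z hz
          have hz0 : (g.map (Int.castRingHom ℂ)).eval z = 0 := isRoot_of_mem_roots hz
          exact hqroot n z (Polynomial.eval_eq_zero_of_dvd_of_eval_eq_zero hgc hz0)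
        have hsplits : Splits (g.map (Int.castRingHom ℂ)) := by
          exact IsAlgClosed.splits _
        have hcb := Polynomial.coeff_bdd_of_roots_le (d := d) (Int.castRingHom ℂ) hgm
          hsplits (by omega) hroots i
        have hnorm : ‖(g.map (Int.castRingHom ℂ)).coeff i‖ = ((|g.coeff i| : ℤ) : ℝ) := by
          rw [coeff_map]
          push_cast
          simp
        rw [hnorm] at hcb
        have hfin : ((|g.coeff i| : ℤ) : ℝ) ≤ ((B' : ℤ) : ℝ) :=
          hcb.trans (Int.le_ceil _)
        exact_mod_cast hfin
      exact ⟨hgm, hgd, by omega, hc0, hg1', hgb⟩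
    exact hSn g hgS hGdvdq
  rw [show Int.castRingHom ℚ = algebraMap ℤ ℚ from (algebraMap_int_eq ℚ).symm,
    ← (hmonic n).irreducible_iff_irreducible_map_fraction_map]
  constructor
  · intro hu
    have := natDegree_eq_zero_of_isUnit hu
    rw [hdeg n] at this
    omega
  · intro a b hab
    by_contra hcon
    push_neg at hcon
    obtain ⟨ha, hb⟩ := hcon
    have hlc : a.leadingCoeff * b.leadingCoeff = 1 := by
      rw [← leadingCoeff_mul, ← hab]
      exact hmonic n
    obtain ⟨f, g, hfm, hgm, hfg, hfu, hgu⟩ :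
        ∃ f g : Polynomial ℤ, f.Monic ∧ g.Monic ∧ p n = f * g ∧ ¬IsUnit f ∧ ¬IsUnit g := by
      rcases Int.mul_eq_one_iff_eq_one_or_neg_one.mp hlc with ⟨h1, h2⟩ | ⟨h1, h2⟩
      · exact ⟨a, b, h1, h2, hab, ha, hb⟩
      · refine ⟨-a, -b, ?_, ?_, by rw [hab]; ring, by simpa using ha, by simpa using hb⟩
        · show (-a).leadingCoeff = 1
          rw [leadingCoeff_neg, h1]; ring
        · show (-b).leadingCoeff = 1
          rw [leadingCoeff_neg, h2]; ring
    have hfd : 1 ≤ f.natDegree := by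
      by_contra hcf
      push_neg at hcf
      have : f = 1 := hfm.natDegree_eq_zero.mp (by omega)
      exact hfu (this ▸ isUnit_one)
    have hgd : 1 ≤ g.natDegree := by
      by_contra hcg
      push_neg at hcg
      have : g = 1 := hgm.natDegree_eq_zero.mp (by omega)
      exact hgu (this ▸ isUnit_one)
    have hboth : ¬ ((f.map R).eval (lam n) = 0 ∧ (g.map R).eval (lam n) = 0) := by
      rintro ⟨hfz, hgz⟩
      obtain ⟨f1, hf1⟩ := Polynomial.dvd_iff_isRoot.mpr hfz
      obtain ⟨g1, hg1⟩ := Polynomial.dvd_iff_isRoot.mpr hgz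
      have hqq : (X - C (lam n)) * q n = (X - C (lam n)) * ((X - C (lam n)) * (f1 * g1)) := by
        rw [hfac n, hfg, Polynomial.map_mul, hf1, hg1]; ring
      have hq2 : q n = (X - C (lam n)) * (f1 * g1) :=
        mul_left_cancel₀ (X_sub_C_ne_zero _) hqq
      apply hqval
      rw [hq2]
      simp
    have hev : ((f.map R)).eval (lam n) * ((g.map R)).eval (lam n) = 0 := by
      rw [← eval_mul, ← Polynomial.map_mul, ← hfg]
      exact hroot n
    rcases mul_eq_zero.mp hev with hfz | hgz
    · exact key f g hfm hgm hfg hfd hgd (fun h => hboth ⟨hfz, h⟩)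
    · exact key g f hgm hfm (by rw [hfg]; ring) hgd hfd (fun h => hboth ⟨h, hgz⟩)
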